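/- Finitely many pairwise distinct Galois extensions E_1, ..., E_n of a field K, each with Gal(E_i/K) a nonabelian finite simple group, are linearly disjoint over K; in particular Gal(E_1⋯E_n/K) is isomorphic to the direct product of the groups Gal(E_i/K). -/

import Mathlib

section GroupTheory

variable {G : Type*} [Group G]

private lemma normal_biInf {ι : Type*} (H : ι → Subgroup G) (hn : ∀ i, (H i).Normal)
    (s : Finset ι) : (⨅ j ∈ s, H j).Normal := by
  constructor
  intro x hx g
  simp only [Subgroup.mem_iInf] at hx ⊢
  exact fun i hi => (hn i).conj_mem x (hx i hi) g

private lemma comm_lemma {N A B : Subgroup G} [N.Normal] (hA : A.Normal) (hB : B.Normal)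
    [IsSimpleGroup (G ⧸ N)]
    (hna : ¬ ∀ a b : G ⧸ N, a * b = b * a) (h : A ⊓ B ≤ N) : A ≤ N ∨ B ≤ N := by
  set f := QuotientGroup.mk' N with hf_def
  have hf : Function.Surjective f := QuotientGroup.mk'_surjective N
  have hcomm : ∀ x ∈ A, ∀ y ∈ B, f x * f y = f y * f x := by
    intro x hx y hy
    have hmem : x * y * (y * x)⁻¹ ∈ N := by
      have h1 : x * (y * x⁻¹ * y⁻¹) ∈ A := mul_mem hx (hA.conj_mem _ (inv_mem hx) y)
      have h2 : (x * y * x⁻¹) * y⁻¹ ∈ B := mul_mem (hB.conj_mem _ hy x) (inv_mem hy)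
      refine h ⟨?_, ?_⟩
      · convert h1 using 1; group; exact Iff.rfl
      · convert h2 using 1; group; exact Iff.rfl
    have h1 : f (x * y * (y * x)⁻¹) = 1 := (QuotientGroup.eq_one_iff _).mpr hmem
    rw [← map_mul, ← map_mul]
    rw [map_mul, map_inv] at h1
    exact mul_inv_eq_one.mp h1
  have hAm : (A.map f).Normal := Subgroup.Normal.map hA f hf
  have hBm : (B.map f).Normal := Subgroup.Normal.map hB f hf
  rcases hAm.eq_bot_or_eq_top with hA' | hA'
  · left
    intro a ha
    have : f a ∈ A.map f := Subgroup.mem_map_of_mem f ha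
    rw [hA', Subgroup.mem_bot] at this
    exact (QuotientGroup.eq_one_iff _).mp this
  rcases hBm.eq_bot_or_eq_top with hB' | hB'
  · right
    intro b hb
    have : f b ∈ B.map f := Subgroup.mem_map_of_mem f hb
    rw [hB', Subgroup.mem_bot] at this
    exact (QuotientGroup.eq_one_iff _).mp this
  · exfalso
    apply hna
    intro a b
    have ha : a ∈ A.map f := hA' ▸ Subgroup.mem_top a
    have hb : b ∈ B.map f := hB' ▸ Subgroup.mem_top b
    obtain ⟨x, hx, rfl⟩ := ha
    obtain ⟨y, hy, rfl⟩ := hb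
    exact hcomm x hx y hy

variable {ι : Type*} (H : ι → Subgroup G) [hn : ∀ j, (H j).Normal]

private lemma quot_nontrivial (i : ι) [IsSimpleGroup (G ⧸ H i)] : H i ≠ ⊤ := by
  intro h
  have : Subsingleton (G ⧸ H i) := by
    rw [h]
    exact QuotientGroup.subsingleton_quotient_top
  exact not_subsingleton _ this

private lemma le_of_le {i k : ι}
    [IsSimpleGroup (G ⧸ H k)] [IsSimpleGroup (G ⧸ H i)] (h : H k ≤ H i) : H k = H i := by
  have hmap : ((H i).map (QuotientGroup.mk' (H k))).Normal :=
    Subgroup.Normal.map (hn i) _ (QuotientGroup.mk'_surjective _)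
  rcases hmap.eq_bot_or_eq_top with h' | h'
  · refine le_antisymm h (fun x hx => ?_)
    have : QuotientGroup.mk' (H k) x ∈ (H i).map (QuotientGroup.mk' (H k)) :=
      Subgroup.mem_map_of_mem _ hx
    rw [h', Subgroup.mem_bot] at this
    exact (QuotientGroup.eq_one_iff _).mp this
  · exfalso
    apply quot_nontrivial H i
    have := congrArg (Subgroup.comap (QuotientGroup.mk' (H k))) h'
    rw [Subgroup.comap_map_eq, QuotientGroup.ker_mk', Subgroup.comap_top,
      sup_of_le_left h] at this
    exact this

private lemma inf_le_imp (hs : ∀ j, IsSimpleGroup (G ⧸ H j))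
    (hna : ∀ j, ¬ ∀ a b : G ⧸ H j, a * b = b * a) :
    ∀ (s : Finset ι) (i : ι), (⨅ j ∈ s, H j) ≤ H i → ∃ j ∈ s, H j = H i := by
  classical
  intro s
  induction s using Finset.induction_on with
  | empty =>
    intro i h
    simp only [Finset.notMem_empty, iInf_false, iInf_top, top_le_iff] at h
    haveI := hs i
    exact absurd h (quot_nontrivial H i)
  | @insert k s hk ih =>
    intro i h
    rw [Finset.iInf_insert] at h
    haveI := hs i
    have hinf : (⨅ j ∈ s, H j).Normal := normal_biInf H hn s
    rcases comm_lemma (hn k) hinf (hna i) h with h' | h'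
    · haveI := hs k
      exact ⟨k, Finset.mem_insert_self k s, le_of_le H h'⟩
    · obtain ⟨j, hj, hj'⟩ := ih i h'
      exact ⟨j, Finset.mem_insert_of_mem hj, hj'⟩

private lemma sup_inf_eq_top (hs : ∀ j, IsSimpleGroup (G ⧸ H j))
    (hna : ∀ j, ¬ ∀ a b : G ⧸ H j, a * b = b * a) (hinj : Function.Injective H) :
    ∀ (s : Finset ι) (i : ι), i ∉ s → H i ⊔ (⨅ j ∈ s, H j) = ⊤ := by
  intro s i his
  haveI hinf : (⨅ j ∈ s, H j).Normal := normal_biInf H hn s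
  haveI hsup : (H i ⊔ ⨅ j ∈ s, H j).Normal := Subgroup.sup_normal _ _
  have hmap : ((H i ⊔ ⨅ j ∈ s, H j).map (QuotientGroup.mk' (H i))).Normal :=
    Subgroup.Normal.map hsup _ (QuotientGroup.mk'_surjective _)
  haveI := hs i
  rcases hmap.eq_bot_or_eq_top with h' | h'
  · exfalso
    have hle : H i ⊔ (⨅ j ∈ s, H j) ≤ H i := by
      intro x hx
      have : QuotientGroup.mk' (H i) x ∈ _ := Subgroup.mem_map_of_mem (QuotientGroup.mk' (H i)) hx
      rw [h', Subgroup.mem_bot] at this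
      exact (QuotientGroup.eq_one_iff _).mp this
    obtain ⟨j, hj, hj'⟩ := inf_le_imp H hs hna s i (le_trans le_sup_right hle)
    exact his (hinj hj' ▸ hj)
  · have := congrArg (Subgroup.comap (QuotientGroup.mk' (H i))) h'
    rw [Subgroup.comap_map_eq, QuotientGroup.ker_mk', Subgroup.comap_top] at this
    rwa [sup_comm _ (H i), ← sup_assoc, sup_idem] at this

end GroupTheory

section GT2
variable {G : Type*} [Group G] {ι : Type*} (H : ι → Subgroup G) [hn : ∀ j, (H j).Normal]

private lemma pi_surj_aux
    (hcomax : ∀ (s : Finset ι) (i : ι), i ∉ s → H i ⊔ (⨅ j ∈ s, H j) = ⊤) :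
    ∀ (s : Finset ι) (f : ∀ i, G ⧸ H i), ∃ g : G, ∀ i ∈ s, QuotientGroup.mk' (H i) g = f i := by
  classical
  intro s
  induction s using Finset.induction_on with
  | empty => exact fun f => ⟨1, fun i hi => absurd hi (Finset.notMem_empty i)⟩
  | @insert k s hk ih =>
    intro f
    obtain ⟨g, hg⟩ := ih f
    have hmap : Subgroup.map (QuotientGroup.mk' (H k)) (⨅ j ∈ s, H j) = ⊤ := by
      have h1 := congrArg (Subgroup.map (QuotientGroup.mk' (H k))) (hcomax s k hk)
      rw [Subgroup.map_sup, Subgroup.map_top_of_surjective _ (QuotientGroup.mk'_surjective _),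
        (Subgroup.map_eq_bot_iff _).mpr (le_of_eq (QuotientGroup.ker_mk' _).symm),
        bot_sup_eq] at h1
      exact h1
    have hq : f k * (QuotientGroup.mk' (H k) g)⁻¹ ∈
        Subgroup.map (QuotientGroup.mk' (H k)) (⨅ j ∈ s, H j) := by
      rw [hmap]; trivial
    obtain ⟨h, hh, hh'⟩ := hq
    refine ⟨h * g, fun i hi => ?_⟩
    rcases Finset.mem_insert.mp hi with rfl | hi'
    · rw [map_mul, hh', inv_mul_cancel_right]
    · rw [map_mul]
      have hmem : h ∈ H i := by
        replace hh : h ∈ (⨅ j ∈ s, H j) := hh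
        simp only [Subgroup.mem_iInf] at hh
        exact hh i hi'
      have h1 : QuotientGroup.mk' (H i) h = 1 := (QuotientGroup.eq_one_iff h).mpr hmem
      rw [h1, one_mul]
      exact hg i hi'

private noncomputable def pi_mulEquiv [Fintype ι]
    (hcomax : ∀ (s : Finset ι) (i : ι), i ∉ s → H i ⊔ (⨅ j ∈ s, H j) = ⊤)
    (hbot : ⨅ i, H i = ⊥) :
    G ≃* ∀ i, G ⧸ H i := by
  refine MulEquiv.ofBijective (Pi.monoidHom (fun i => QuotientGroup.mk' (H i))) ⟨?_, ?_⟩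
  · rw [← MonoidHom.ker_eq_bot_iff]
    rw [eq_bot_iff, ← hbot]
    intro g hg
    simp only [MonoidHom.mem_ker, Pi.monoidHom, funext_iff, MonoidHom.coe_mk, OneHom.coe_mk,
      Pi.one_apply] at hg
    simp only [Subgroup.mem_iInf]
    exact fun i => (QuotientGroup.eq_one_iff _).mp (hg i)
  · intro f
    obtain ⟨g, hg⟩ := pi_surj_aux H hcomax Finset.univ f
    exact ⟨g, funext fun i => hg i (Finset.mem_univ i)⟩
end GT2
set_option maxHeartbeats 1000000

open IntermediateField

private theorem aux_fld (K Ω : Type*) [Field K] [Field Ω] [Algebra K Ω]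
    {ι : Type*} [Fintype ι] (E : ι → IntermediateField K Ω)
    (hdist : Function.Injective E)
    [∀ i, FiniteDimensional K (E i)]
    [∀ i, IsGalois K (E i)]
    (hsimple : ∀ i, IsSimpleGroup ((E i) ≃ₐ[K] (E i)))
    (hnonab : ∀ i, ¬ ∀ a b : (E i) ≃ₐ[K] (E i), a * b = b * a) :
    Module.finrank K ↥(⨆ i, E i) = ∏ i, Module.finrank K ↥(E i) ∧
      Nonempty ((↥(⨆ i, E i) ≃ₐ[K] ↥(⨆ i, E i)) ≃* ∀ i, (E i) ≃ₐ[K] (E i)) := by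
  classical
  set M : IntermediateField K Ω := ⨆ i, E i with hM
  haveI : FiniteDimensional K M := IntermediateField.finiteDimensional_iSup_of_finite
  haveI : ∀ i, Normal K (E i) := fun i => IsGalois.to_normal
  haveI : ∀ i, Algebra.IsSeparable K (E i) := fun i => IsGalois.to_isSeparable
  haveI : Normal K M := IntermediateField.normal_iSup K Ω E
  haveI : Algebra.IsSeparable K M := IntermediateField.isSeparable_iSup K Ω
  haveI : IsGalois K M := ⟨⟩
  -- the fields `E i` viewed inside `M`
  let incl : ∀ i, ↥(E i) →ₐ[K] ↥M := fun i => IntermediateField.inclusion (le_iSup E i)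
  let E' : ι → IntermediateField K ↥M := fun i => (incl i).fieldRange
  let e : ∀ i, ↥(E i) ≃ₐ[K] ↥(E' i) := fun i => AlgEquiv.ofInjectiveField (incl i)
  have hcomp : ∀ i, M.val.comp (incl i) = (E i).val := fun i => by ext x; rfl
  have hmapval : ∀ i, (E' i).map M.val = E i := by
    intro i
    rw [show E' i = (incl i).fieldRange from rfl, AlgHom.map_fieldRange, hcomp,
      fieldRange_val]
  have htop : (⨆ i, E' i) = ⊤ := by
    apply IntermediateField.map_injective M.val
    rw [IntermediateField.map_iSup]
    simp only [hmapval]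
    rw [← AlgHom.fieldRange_eq_map, IntermediateField.fieldRange_val]
  haveI : ∀ i, IsGalois K ↥(E' i) := fun i => IsGalois.of_algEquiv (e i)
  haveI : ∀ i, Normal K ↥(E' i) := fun i => IsGalois.to_normal
  let G := ↥M ≃ₐ[K] ↥M
  let H : ι → Subgroup G := fun i => IntermediateField.fixingSubgroup (E' i)
  have hker : ∀ i, (AlgEquiv.restrictNormalHom ↥(E' i) :
      G →* ↥(E' i) ≃ₐ[K] ↥(E' i)).ker = H i := fun i =>
    IntermediateField.restrictNormalHom_ker (E' i)
  haveI hn : ∀ i, (H i).Normal := fun i => (hker i) ▸ (AlgEquiv.restrictNormalHom ↥(E' i)).normal_ker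
  -- quotient isos
  let fe : ∀ i, (G ⧸ H i) ≃* ((E i) ≃ₐ[K] (E i)) := fun i =>
    ((QuotientGroup.quotientMulEquivOfEq (hker i).symm).trans
      (QuotientGroup.quotientKerEquivOfSurjective _
        (AlgEquiv.restrictNormalHom_surjective ↥M))).trans
      (AlgEquiv.autCongr (e i).symm)
  haveI hs : ∀ i, IsSimpleGroup (G ⧸ H i) := by
    intro i
    haveI := hsimple i
    haveI : Nontrivial (G ⧸ H i) := (fe i).toEquiv.nontrivial
    exact IsSimpleGroup.isSimpleGroup_of_surjective (fe i).symm.toMonoidHom (fe i).symm.surjective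
  have hna : ∀ i, ¬ ∀ a b : G ⧸ H i, a * b = b * a := by
    intro i h
    apply hnonab i
    intro a b
    have h2 := congrArg (fe i) (h ((fe i).symm a) ((fe i).symm b))
    rwa [map_mul, map_mul, MulEquiv.apply_symm_apply, MulEquiv.apply_symm_apply] at h2
  have hinj : Function.Injective H := by
    intro i j hij
    have h1 : fixedField (H i) = fixedField (H j) := by rw [hij]
    rw [show H i = fixingSubgroup (E' i) from rfl,
      show H j = fixingSubgroup (E' j) from rfl,
      IsGalois.fixedField_fixingSubgroup, IsGalois.fixedField_fixingSubgroup] at h1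
    apply hdist
    rw [← hmapval i, ← hmapval j, h1]
  have hbot : (⨅ i, H i) = ⊥ := by
    rw [eq_bot_iff]
    intro σ hσ
    rw [Subgroup.mem_iInf] at hσ
    have hfix : ∀ i, E' i ≤ fixedField (Subgroup.zpowers σ) := fun i =>
      (IntermediateField.le_iff_le _ _).mpr (Subgroup.zpowers_le.mpr (hσ i))
    have h2 : (⊤ : IntermediateField K ↥M) ≤ fixedField (Subgroup.zpowers σ) :=
      htop ▸ iSup_le hfix
    rw [Subgroup.mem_bot]
    refine AlgEquiv.ext fun x => ?_
    exact h2 trivial ⟨σ, Subgroup.mem_zpowers σ⟩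
  have hcomax := sup_inf_eq_top H hs hna hinj
  let Phi : G ≃* ∀ i, (E i) ≃ₐ[K] (E i) :=
    (pi_mulEquiv H hcomax hbot).trans (MulEquiv.piCongrRight fe)
  constructor
  · rw [← IsGalois.card_aut_eq_finrank K ↥M]
    have h1 : Fintype.card G = ∏ i, Fintype.card ((E i) ≃ₐ[K] (E i)) := by
      rw [Fintype.card_congr Phi.toEquiv, Fintype.card_pi]
    rw [show Nat.card (↥M ≃ₐ[K] ↥M) = Fintype.card G from Nat.card_eq_fintype_card, h1]
    exact Finset.prod_congr rfl fun i _ => Nat.card_eq_fintype_card.symm.trans (IsGalois.card_aut_eq_finrank K (E i))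
  · exact ⟨Phi⟩

/-- Finitely many pairwise distinct Galois extensions of `K` (inside a fixed algebraic
closure `Ω`), each with nonabelian finite simple Galois group over `K`, are linearly
disjoint over `K` (each one is linearly disjoint from the compositum of the others);
in particular the Galois group of their compositum over `K` is isomorphic to the direct
product of the individual Galois groups. -/
theorem linearDisjoint_of_simple_nonabelian_galois
    (K Ω : Type*) [Field K] [Field Ω] [Algebra K Ω] [IsAlgClosure K Ω]
    (n : ℕ) (E : Fin n → IntermediateField K Ω)
    (hdist : Function.Injective E)
    [∀ i, FiniteDimensional K (E i)]
    [∀ i, IsGalois K (E i)]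
    (hsimple : ∀ i, IsSimpleGroup ((E i) ≃ₐ[K] (E i)))
    (hnonab : ∀ i, ¬ ∀ a b : (E i) ≃ₐ[K] (E i), a * b = b * a) :
    (∀ i, (E i).LinearDisjoint ↥(⨆ j ∈ ({i}ᶜ : Set (Fin n)), E j)) ∧
      Nonempty ((↥(⨆ i, E i) ≃ₐ[K] ↥(⨆ i, E i)) ≃* ∀ i, (E i) ≃ₐ[K] (E i)) := by
  classical
  obtain ⟨hfull, hiso⟩ := aux_fld K Ω E hdist hsimple hnonab
  refine ⟨?_, hiso⟩
  intro i
  have hBB : (⨆ j ∈ ({i}ᶜ : Set (Fin n)), E j) =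
      ⨆ j : ({i}ᶜ : Set (Fin n)), E (j : Fin n) := by
    rw [iSup_subtype]
  rw [hBB]
  set B : IntermediateField K Ω := ⨆ j : ({i}ᶜ : Set (Fin n)), E (j : Fin n) with hBdef
  haveI : FiniteDimensional K B := IntermediateField.finiteDimensional_iSup_of_finite
  obtain ⟨hsub, -⟩ := aux_fld K Ω (fun j : ({i}ᶜ : Set (Fin n)) => E (j : Fin n))
    (hdist.comp Subtype.val_injective) (fun j => hsimple _) (fun j => hnonab _)
  have hEiB : E i ⊔ B = ⨆ j, E j := by
    apply le_antisymm
    · exact sup_le (le_iSup E i) (iSup_le fun j => le_iSup E (j : Fin n))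
    · refine iSup_le fun j => ?_
      by_cases hj : j = i
      · subst hj; exact le_sup_left
      · exact le_trans (le_iSup (fun j : ({i}ᶜ : Set (Fin n)) => E (j : Fin n)) ⟨j, hj⟩)
          le_sup_right
  have hsplit : (∏ j, Module.finrank K ↥(E j)) =
      Module.finrank K ↥(E i) * ∏ j : ({i}ᶜ : Set (Fin n)), Module.finrank K ↥(E (j : Fin n)) := by
    rw [Finset.prod_set_coe (f := fun j => Module.finrank K ↥(E j))]
    rw [show (({i}ᶜ : Set (Fin n)).toFinset) = Finset.univ.erase i by ext j; simp]
    exact (Finset.mul_prod_erase Finset.univ _ (Finset.mem_univ i)).symm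
  refine IntermediateField.LinearDisjoint.of_finrank_sup ?_
  rw [hEiB, hfull, hsplit, hsub]
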